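/- For every R > 0 and s ∈ ℝ, ψ_R³(s) = ∫_0^π sin θ · φ_R³(s cos θ) dθ = 2R² sinc²(Rs/2), where φ_R³(t) = ∫_{-R}^{R} |ρ| e^{iρt} dρ. -/

import Mathlib

open Complex Real

noncomputable def sinc (x : ℝ) : ℝ := if x = 0 then 1 else Real.sin x / x

open MeasureTheory intervalIntegral in
/-- Fubini swap for the double integral. -/
lemma swap_aux (R s : ℝ) (hR : 0 < R) :
    (∫ θ in (0:ℝ)..π, ∫ ρ in (-R)..R,
        (Real.sin θ : ℂ) * (((|ρ| : ℝ) : ℂ) * Complex.exp (Complex.I * ρ * (s * Real.cos θ)))) =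
    ∫ ρ in (-R)..R, ∫ θ in (0:ℝ)..π,
        (Real.sin θ : ℂ) * (((|ρ| : ℝ) : ℂ) * Complex.exp (Complex.I * ρ * (s * Real.cos θ))) := by
  have h1 : (0:ℝ) ≤ π := Real.pi_pos.le
  have h2 : (-R) ≤ R := by linarith
  have hcont : Continuous (fun p : ℝ × ℝ =>
      (Real.sin p.1 : ℂ) * (((|p.2| : ℝ) : ℂ) * Complex.exp (Complex.I * p.2 * (s * Real.cos p.1)))) := by
    fun_prop
  rw [intervalIntegral.integral_of_le h1, intervalIntegral.integral_of_le h2]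
  simp_rw [intervalIntegral.integral_of_le h2, intervalIntegral.integral_of_le h1]
  apply MeasureTheory.integral_integral_swap
  rw [Function.uncurry_def]
  rw [MeasureTheory.Measure.prod_restrict]
  apply MeasureTheory.IntegrableOn.mono_set
    (t := Set.Icc (0:ℝ) π ×ˢ Set.Icc (-R) R)
  · exact hcont.continuousOn.integrableOn_compact (isCompact_Icc.prod isCompact_Icc)
  · exact Set.prod_mono Set.Ioc_subset_Icc_self Set.Ioc_subset_Icc_self

/-- Inner θ-integral in closed form (case s ≠ 0). -/
lemma inner_aux (s : ℝ) (hs : s ≠ 0) (ρ : ℝ) :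
    (∫ θ in (0:ℝ)..π,
        (Real.sin θ : ℂ) * (((|ρ| : ℝ) : ℂ) * Complex.exp (Complex.I * ρ * (s * Real.cos θ)))) =
    ((2 * Real.sin (|ρ| * s) / s : ℝ) : ℂ) := by
  rcases eq_or_ne ρ 0 with rfl | hρ
  · simp
  · set a : ℝ := ρ * s with ha
    have haz : a ≠ 0 := mul_ne_zero hρ hs
    have hIa : (Complex.I * a) ≠ 0 := by
      simp [Complex.I_ne_zero, Complex.ofReal_eq_zero, haz]
    -- antiderivative
    have key : ∀ θ : ℝ, HasDerivAt
        (fun θ : ℝ => -(((|ρ| : ℝ) : ℂ) / (Complex.I * a)) * Complex.exp (Complex.I * a * Real.cos θ))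
        ((Real.sin θ : ℂ) * (((|ρ| : ℝ) : ℂ) * Complex.exp (Complex.I * ρ * (s * Real.cos θ)))) θ := by
      intro θ
      have hcos : HasDerivAt (fun θ : ℝ => ((Real.cos θ : ℝ) : ℂ)) (-(Real.sin θ) : ℂ) θ := by
        have := (Real.hasDerivAt_cos θ).ofReal_comp
        simpa using this
      have h1 : HasDerivAt (fun θ : ℝ => Complex.I * a * ((Real.cos θ : ℝ) : ℂ))
          (Complex.I * a * (-(Real.sin θ))) θ := hcos.const_mul _
      have h2 : HasDerivAt (fun θ : ℝ => Complex.exp (Complex.I * a * Real.cos θ))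
          (Complex.exp (Complex.I * a * Real.cos θ) * (Complex.I * a * (-(Real.sin θ)))) θ :=
        (Complex.hasDerivAt_exp _).comp θ h1
      have h3 := h2.const_mul (-(((|ρ| : ℝ) : ℂ) / (Complex.I * a)))
      refine h3.congr_deriv ?_
      have harg : Complex.I * (ρ:ℂ) * ((s:ℝ) * Real.cos θ : ℂ) = Complex.I * (a:ℂ) * (Real.cos θ : ℂ) := by
        push_cast [ha]; ring
      rw [harg]
      have haC : ((a:ℝ):ℂ) ≠ 0 := by exact_mod_cast haz
      field_simp
    rw [intervalIntegral.integral_eq_sub_of_hasDerivAt (fun θ _ => key θ)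
      (by apply Continuous.intervalIntegrable; fun_prop)]
    -- now evaluate
    have hsin : Real.sin (|ρ| * s) = |ρ| / ρ * Real.sin a := by
      rcases abs_cases ρ with ⟨h, _⟩ | ⟨h, _⟩
      · rw [h, ha]; field_simp
      · rw [h, ha]
        rw [show -ρ * s = -(ρ * s) by ring, Real.sin_neg]
        field_simp
    have hexp : Complex.exp (Complex.I * a * Real.cos π) - Complex.exp (Complex.I * a * Real.cos 0)
        = -(2 * Complex.I * Complex.sin a) := by
      rw [Real.cos_pi, Real.cos_zero]
      rw [Complex.sin]
      push_cast
      ring_nf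
      rw [Complex.I_sq]
      ring
    have : -(((|ρ| : ℝ) : ℂ) / (Complex.I * a)) * Complex.exp (Complex.I * a * Real.cos π) -
        -(((|ρ| : ℝ) : ℂ) / (Complex.I * a)) * Complex.exp (Complex.I * a * Real.cos 0)
        = -(((|ρ| : ℝ) : ℂ) / (Complex.I * a)) *
          (Complex.exp (Complex.I * a * Real.cos π) - Complex.exp (Complex.I * a * Real.cos 0)) := by
      ring
    rw [this, hexp]
    have hsinC : Complex.sin (a : ℂ) = ((Real.sin a : ℝ) : ℂ) := by
      rw [Complex.ofReal_sin]
    rw [hsinC]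
    have hρC : ((ρ : ℝ) : ℂ) ≠ 0 := by exact_mod_cast hρ
    have hsC : ((s : ℝ) : ℂ) ≠ 0 := by exact_mod_cast hs
    push_cast [hsin, ha]
    field_simp

/-- The real outer integral (case s ≠ 0). -/
lemma outer_aux (R s : ℝ) (hR : 0 < R) (hs : s ≠ 0) :
    (∫ ρ in (-R)..R, 2 * Real.sin (|ρ| * s) / s) = 4 * (1 - Real.cos (R * s)) / s ^ 2 := by
  have hint : ∀ a b : ℝ, IntervalIntegrable (fun ρ => 2 * Real.sin (|ρ| * s) / s)
      MeasureTheory.volume a b := by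
    intro a b; apply Continuous.intervalIntegrable; fun_prop
  have hsplit : (∫ ρ in (-R)..R, 2 * Real.sin (|ρ| * s) / s)
      = (∫ ρ in (-R)..(0:ℝ), 2 * Real.sin (|ρ| * s) / s)
        + ∫ ρ in (0:ℝ)..R, 2 * Real.sin (|ρ| * s) / s :=
    (intervalIntegral.integral_add_adjacent_intervals (hint _ _) (hint _ _)).symm
  have hneg : (∫ ρ in (-R)..(0:ℝ), 2 * Real.sin (|ρ| * s) / s)
      = ∫ ρ in (0:ℝ)..R, 2 * Real.sin (|ρ| * s) / s := by
    have h := intervalIntegral.integral_comp_neg (a := (0:ℝ)) (b := R)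
      (fun ρ => 2 * Real.sin (|ρ| * s) / s)
    simp only [neg_zero] at h
    rw [← h]
    simp [abs_neg]
  have hpos : (∫ ρ in (0:ℝ)..R, 2 * Real.sin (|ρ| * s) / s)
      = ∫ ρ in (0:ℝ)..R, 2 * Real.sin (ρ * s) / s := by
    apply intervalIntegral.integral_congr
    intro x hx
    show 2 * Real.sin (|x| * s) / s = 2 * Real.sin (x * s) / s
    rw [Set.uIcc_of_le hR.le] at hx
    rw [_root_.abs_of_nonneg hx.1]
  have hval : (∫ ρ in (0:ℝ)..R, 2 * Real.sin (ρ * s) / s) = 2 * (1 - Real.cos (R * s)) / s ^ 2 := by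
    have key : ∀ ρ : ℝ, HasDerivAt (fun ρ : ℝ => -2 * Real.cos (ρ * s) / s ^ 2)
        (2 * Real.sin (ρ * s) / s) ρ := by
      intro ρ
      have h1 : HasDerivAt (fun ρ : ℝ => ρ * s) s ρ := by
        simpa using (hasDerivAt_id ρ).mul_const s
      have h2 : HasDerivAt (fun ρ : ℝ => Real.cos (ρ * s)) (-Real.sin (ρ * s) * s) ρ :=
        (Real.hasDerivAt_cos _).comp ρ h1
      have h3 := (h2.const_mul (-2 : ℝ)).div_const (s ^ 2)
      refine h3.congr_deriv ?_
      field_simp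
    rw [intervalIntegral.integral_eq_sub_of_hasDerivAt (fun ρ _ => key ρ)
      (by apply Continuous.intervalIntegrable; fun_prop)]
    field_simp
    rw [mul_zero, Real.cos_zero]
    ring
  rw [hsplit, hneg, hpos, hval]; ring

open MeasureTheory in
theorem psi_R_three_dim (R s : ℝ) (hR : 0 < R)
    (φ : ℝ → ℂ)
    (hφ : ∀ t, φ t = ∫ ρ in (-R)..R, ((|ρ| : ℝ) : ℂ) * Complex.exp (Complex.I * ρ * t)) :
    (∫ θ in (0:ℝ)..π, (Real.sin θ : ℂ) * φ (s * Real.cos θ)) =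
      ((2 * R^2 * (_root_.sinc (R * s / 2))^2 : ℝ) : ℂ) := by
  rcases eq_or_ne s 0 with rfl | hs
  · -- s = 0
    have hφ0 : φ 0 = ((R ^ 2 : ℝ) : ℂ) := by
      rw [hφ 0]
      have : (∫ ρ in (-R)..R, ((|ρ| : ℝ) : ℂ) * Complex.exp (Complex.I * ρ * ((0:ℝ):ℂ)))
          = ∫ ρ in (-R)..R, ((|ρ| : ℝ) : ℂ) := by
        apply intervalIntegral.integral_congr
        intro x _; simp
      rw [this, intervalIntegral.integral_ofReal]
      norm_cast
      have h1 : (∫ ρ in (-R)..(0:ℝ), |ρ|) = R ^ 2 / 2 := by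
        have : (∫ ρ in (-R)..(0:ℝ), |ρ|) = ∫ ρ in (-R)..(0:ℝ), -ρ := by
          apply intervalIntegral.integral_congr
          intro x hx
          rw [Set.uIcc_of_le (by linarith : -R ≤ 0)] at hx
          exact _root_.abs_of_nonpos hx.2
        rw [this, intervalIntegral.integral_neg, integral_id]
        ring
      have h2 : (∫ ρ in (0:ℝ)..R, |ρ|) = R ^ 2 / 2 := by
        have : (∫ ρ in (0:ℝ)..R, |ρ|) = ∫ ρ in (0:ℝ)..R, ρ := by
          apply intervalIntegral.integral_congr
          intro x hx
          rw [Set.uIcc_of_le hR.le] at hx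
          exact _root_.abs_of_nonneg hx.1
        rw [this, integral_id]
        ring
      have hint : ∀ a b : ℝ, IntervalIntegrable (fun ρ : ℝ => |ρ|) MeasureTheory.volume a b := by
        intro a b; apply Continuous.intervalIntegrable; fun_prop
      rw [← intervalIntegral.integral_add_adjacent_intervals (hint (-R) 0) (hint 0 R)] at *
      rw [h1, h2]; ring
    have hrw : (∫ θ in (0:ℝ)..π, (Real.sin θ : ℂ) * φ (0 * Real.cos θ))
        = (∫ θ in (0:ℝ)..π, ((Real.sin θ : ℝ) : ℂ)) * φ 0 := by
      simp_rw [zero_mul]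
      exact intervalIntegral.integral_mul_const _ _
    rw [hrw, intervalIntegral.integral_ofReal, integral_sin, hφ0]
    push_cast [_root_.sinc]
    norm_num
  · -- s ≠ 0
    simp_rw [hφ, ← intervalIntegral.integral_const_mul, Complex.ofReal_mul]
    rw [swap_aux R s hR]
    have : (∫ ρ in (-R)..R, ∫ θ in (0:ℝ)..π,
        (Real.sin θ : ℂ) * (((|ρ| : ℝ) : ℂ) * Complex.exp (Complex.I * ρ * (s * Real.cos θ))))
        = ∫ ρ in (-R)..R, ((2 * Real.sin (|ρ| * s) / s : ℝ) : ℂ) := by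
      apply intervalIntegral.integral_congr
      intro ρ _
      exact inner_aux s hs ρ
    rw [this, intervalIntegral.integral_ofReal, outer_aux R s hR hs]
    norm_cast
    have hRs : R * s / 2 ≠ 0 := by
      simp [hs, hR.ne']
    rw [_root_.sinc, if_neg hRs]
    have hcos : Real.cos (R * s) = 1 - 2 * Real.sin (R * s / 2) ^ 2 := by
      have h := Real.cos_two_mul' (R * s / 2)
      have h2 := Real.sin_sq_add_cos_sq (R * s / 2)
      rw [show 2 * (R * s / 2) = R * s by ring] at h
      linarith
    rw [hcos]
    field_simp
    ring
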